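/- Let (X_n)_{n≥0} be a polarization-type process with limit X_∞. Then for any fixed β ∈ (0, 1/2), lim_{n→∞} P(X_n ≤ 2^{−2^{β·n}}) = P(X_∞ = 0). -/

import Mathlib

open MeasureTheory ProbabilityTheory Filter

/-- Deterministic pathwise bootstrapping lemma. -/
lemma polarization_det (q : ℝ) (hq : 1 ≤ q) (x : ℕ → ℝ) (b : ℕ → ℕ)
    (hx01 : ∀ n, x n ∈ Set.Icc (0:ℝ) 1)
    (hdyn : ∀ n, (x n ≠ 0 ∧ x n ≠ 1 →
        (b (n+1) = 1 → x n ≤ x (n+1) ∧ x (n+1) ≤ q * x n) ∧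
        (b (n+1) = 0 → x (n+1) = x n ^ 2)) ∧
      ((x n = 0 ∨ x n = 1) → x (n+1) = x n))
    (hb : ∀ n : ℕ, b (n+1) = 0 ∨ b (n+1) = 1)
    (hx0 : Tendsto x atTop (nhds 0))
    (hlln : Tendsto (fun n => (∑ i ∈ Finset.range n,
        (if b (i+1) = 0 then (1:ℝ) else 0)) / n) atTop (nhds (1/2)))
    (β : ℝ) (hβ : β ∈ Set.Ioo (0:ℝ) (1/2)) :
    ∀ᶠ n in atTop, x n ≤ (2:ℝ) ^ (-(2:ℝ) ^ (β * (n:ℝ))) := by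
  -- absorbing states
  have habs : ∀ k n, k ≤ n → (x k = 0 ∨ x k = 1) → x n = x k := by
    intro k n hkn h
    induction n, hkn using Nat.le_induction with
    | base => rfl
    | succ n hn ih =>
      have := (hdyn n).2
      rcases h with h | h
      · rw [(hdyn n).2 (by rw [ih]; exact Or.inl h), ih]
      · rw [(hdyn n).2 (by rw [ih]; exact Or.inr h), ih]
  by_cases hzero : ∃ k, x k = 0
  · obtain ⟨k, hk⟩ := hzero
    filter_upwards [eventually_ge_atTop k] with n hn
    rw [habs k n hn (Or.inl hk), hk]
    positivity
  push_neg at hzero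
  have hpos : ∀ k, 0 < x k := fun k => lt_of_le_of_ne (hx01 k).1 (Ne.symm (hzero k))
  have hne1 : ∀ k, x k ≠ 1 := by
    intro k hk
    have := hx0.eventually (eventually_lt_nhds (show (0:ℝ) < 1/2 by norm_num))
    obtain ⟨N, hN⟩ := this.exists_forall_of_atTop
    have hN' := hN (max N k) (le_max_left _ _)
    rw [habs k (max N k) (le_max_right _ _) (Or.inr hk), hk] at hN'
    norm_num at hN'
  have hlt1 : ∀ k, x k < 1 := fun k => lt_of_le_of_ne (hx01 k).2 (hne1 k)
  -- logarithmic quantities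
  set c : ℝ := Real.logb 2 q with hc_def
  have hc : 0 ≤ c := Real.logb_nonneg (by norm_num) hq
  set M : ℕ → ℝ := fun n => -Real.logb 2 (x n) with hM_def
  have hM0 : ∀ n, 0 < M n := by
    intro n
    have := Real.logb_neg (show (1:ℝ) < 2 by norm_num) (hpos n) (hlt1 n)
    simp only [hM_def]; linarith
  have step0 : ∀ n, b (n+1) = 0 → M (n+1) = 2 * M n := by
    intro n h
    have hx := ((hdyn n).1 ⟨hzero n, hne1 n⟩).2 h
    simp only [hM_def, hx]
    rw [show x n ^ 2 = x n * x n by ring,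
      Real.logb_mul (ne_of_gt (hpos n)) (ne_of_gt (hpos n))]
    ring
  have step1u : ∀ n, b (n+1) = 1 → M n - c ≤ M (n+1) ∧ M (n+1) ≤ M n := by
    intro n h
    obtain ⟨h1, h2⟩ := ((hdyn n).1 ⟨hzero n, hne1 n⟩).1 h
    constructor
    · have : Real.logb 2 (x (n+1)) ≤ Real.logb 2 (q * x n) :=
        Real.logb_le_logb_of_le (by norm_num) (hpos (n+1)) h2
      rw [Real.logb_mul (ne_of_gt (lt_of_lt_of_le one_pos hq)) (ne_of_gt (hpos n))] at this
      simp only [hM_def]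
      linarith
    · have : Real.logb 2 (x n) ≤ Real.logb 2 (x (n+1)) :=
        Real.logb_le_logb_of_le (by norm_num) (hpos n) h1
      simp only [hM_def]
      linarith
  -- the counting function
  set s : ℕ → ℝ := fun n => ∑ i ∈ Finset.range n, (if b (i+1) = 0 then (1:ℝ) else 0)
    with hs_def
  have hs_succ : ∀ n, s (n+1) = s n + (if b (n+1) = 0 then (1:ℝ) else 0) := by
    intro n; simp only [hs_def, Finset.sum_range_succ]
  have hs_mono : Monotone s := by
    apply monotone_nat_of_le_succ
    intro n
    have h : (0:ℝ) ≤ (if b (n+1) = 0 then (1:ℝ) else 0) := by split <;> norm_num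
    rw [hs_succ]; linarith
  -- constants
  obtain ⟨hβ0, hβh⟩ := hβ
  set θ : ℝ := 1/2 - β with hθ_def
  have hθ0 : 0 < θ := by simp only [hθ_def]; linarith
  have hθ1 : θ < 1 := by simp only [hθ_def]; linarith
  set K : ℝ := 2 * (c + 2) / θ with hK_def
  have hK0 : 0 < K := by positivity
  -- stage 0 : eventual lower bound on M
  have hstage0 : ∃ m₀, ∀ k, m₀ ≤ k → K ≤ M k := by
    have : ∀ᶠ k in atTop, x k < (2:ℝ) ^ (-K) :=
      hx0.eventually (eventually_lt_nhds (by positivity))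
    obtain ⟨m₀, hm₀⟩ := this.exists_forall_of_atTop
    refine ⟨m₀, fun k hk => ?_⟩
    have h1 : Real.logb 2 (x k) ≤ Real.logb 2 ((2:ℝ) ^ (-K)) :=
      Real.logb_le_logb_of_le (by norm_num) (hpos k) (hm₀ k hk).le
    rw [Real.logb_rpow (by norm_num : (0:ℝ) < 2) (by norm_num : (2:ℝ) ≠ 1)] at h1
    simp only [hM_def]; linarith
  obtain ⟨m₀, hm₀⟩ := hstage0
  -- stage 1
  have hstage1 : ∀ k, m₀ ≤ k →
      K * (1 + (s k - s m₀)) - c * ((k:ℝ) - (m₀:ℝ)) ≤ M k := by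
    intro k hk
    induction k, hk using Nat.le_induction with
    | base =>
      have := hm₀ m₀ le_rfl
      simp only [sub_self, mul_zero, add_zero, mul_one]
      linarith
    | succ k hk ih =>
      rcases hb k with h | h
      · have h2 := step0 k h
        have h3 := hm₀ k hk
        rw [hs_succ, if_pos h]
        push_cast
        nlinarith
      · have h2 := (step1u k h).1
        rw [hs_succ, if_neg (by omega)]
        push_cast
        nlinarith
  -- stage 2
  have hstage2 : ∀ m k, m ≤ k →
      (2:ℝ) ^ (s k - s m) * (M m - c * ((k:ℝ) - (m:ℝ))) ≤ M k := by
    intro m k hmk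
    induction k, hmk using Nat.le_induction with
    | base => simp
    | succ k hk ih =>
      have hD0 : (0:ℝ) < (2:ℝ) ^ (s k - s m) := Real.rpow_pos_of_pos (by norm_num) _
      have hD1 : (1:ℝ) ≤ (2:ℝ) ^ (s k - s m) := by
        rw [show (1:ℝ) = (2:ℝ) ^ (0:ℝ) by simp]
        exact Real.rpow_le_rpow_of_exponent_le (by norm_num)
          (by linarith [sub_nonneg.mpr (hs_mono hk)])
      rcases hb k with h | h
      · have h2 := step0 k h
        rw [hs_succ, if_pos h]
        have hre : (2:ℝ) ^ (s k + 1 - s m) = 2 * (2:ℝ) ^ (s k - s m) := by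
          rw [show s k + 1 - s m = (s k - s m) + 1 by ring, Real.rpow_add (by norm_num),
            Real.rpow_one]; ring
        rw [hre]
        push_cast
        nlinarith
      · have h2 := (step1u k h).1
        rw [hs_succ, if_neg (by omega), add_zero]
        push_cast
        nlinarith
  -- the intermediate times
  set mf : ℕ → ℕ := fun n => ⌈θ * (n:ℝ)⌉₊ with hmf_def
  have hmf_le : ∀ n, mf n ≤ n := by
    intro n
    apply Nat.ceil_le.mpr
    calc θ * (n:ℝ) ≤ 1 * (n:ℝ) := by
          apply mul_le_mul_of_nonneg_right hθ1.le (Nat.cast_nonneg n)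
      _ = (n:ℝ) := by ring
  have hmf_lb : ∀ n : ℕ, θ * (n:ℝ) ≤ (mf n : ℝ) := fun n => Nat.le_ceil _
  have hmf_ub : ∀ n : ℕ, (mf n : ℝ) < θ * (n:ℝ) + 1 :=
    fun n => Nat.ceil_lt_add_one (by positivity)
  have hmf_top : Tendsto mf atTop atTop := by
    rw [← tendsto_natCast_atTop_iff (R := ℝ)]
    apply tendsto_atTop_mono hmf_lb
    exact Tendsto.const_mul_atTop hθ0 tendsto_natCast_atTop_atTop
  have hmf_ratio : Tendsto (fun n => (mf n : ℝ) / (n:ℝ)) atTop (nhds θ) := by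
    have hub : Tendsto (fun n : ℕ => θ + 1 / (n:ℝ)) atTop (nhds θ) := by
      have : Tendsto (fun n : ℕ => 1 / (n:ℝ)) atTop (nhds 0) := tendsto_one_div_atTop_nhds_zero_nat
      simpa using tendsto_const_nhds.add this
    apply tendsto_of_tendsto_of_tendsto_of_le_of_le' (tendsto_const_nhds) hub
    · filter_upwards [eventually_gt_atTop 0] with n hn
      rw [le_div_iff₀ (by positivity)]
      exact hmf_lb n
    · filter_upwards [eventually_gt_atTop 0] with n hn
      rw [div_le_iff₀ (by positivity), add_mul, one_div, inv_mul_cancel₀ (by positivity)]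
      linarith [hmf_ub n, mul_le_mul_of_nonneg_right (le_refl θ) (Nat.cast_nonneg n)]
  -- ratio limits
  have hsm_ratio : Tendsto (fun n => s (mf n) / (n:ℝ)) atTop (nhds (θ / 2)) := by
    have h1 : Tendsto (fun n => s (mf n) / (mf n : ℝ)) atTop (nhds (1/2)) :=
      hlln.comp hmf_top
    have h2 := h1.mul hmf_ratio
    have heq : ∀ᶠ n in atTop, s (mf n) / (mf n : ℝ) * ((mf n : ℝ) / (n:ℝ))
        = s (mf n) / (n:ℝ) := by
      filter_upwards [hmf_top.eventually (eventually_gt_atTop 0),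
        eventually_gt_atTop 0] with n h1' h2'
      have : (mf n : ℝ) ≠ 0 := by positivity
      field_simp
    rw [show θ / 2 = 1/2 * θ by ring]
    exact Tendsto.congr' heq h2
  -- eventual count bound : s n - s (mf n) ≥ β n
  have hcount : ∀ᶠ n : ℕ in atTop, β * (n:ℝ) ≤ s n - s (mf n) := by
    have h1 : Tendsto (fun n => s n / (n:ℝ) - s (mf n) / (n:ℝ)) atTop
        (nhds (1/2 - θ/2)) := hlln.sub hsm_ratio
    have hgt : β < 1/2 - θ/2 := by simp only [hθ_def]; linarith
    filter_upwards [h1.eventually (eventually_gt_nhds hgt),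
      eventually_gt_atTop 0] with n h hn
    have hn' : (0:ℝ) < (n:ℝ) := by positivity
    rw [div_sub_div_same] at h
    calc β * (n:ℝ) ≤ ((s n - s (mf n)) / (n:ℝ)) * (n:ℝ) := by
          apply mul_le_mul_of_nonneg_right h.le hn'.le
      _ = s n - s (mf n) := by field_simp
  -- eventual bound : M (mf n) - c * (n - mf n) ≥ 1
  have hmain : ∀ᶠ n : ℕ in atTop, 1 ≤ M (mf n) - c * ((n:ℝ) - (mf n : ℝ)) := by
    set C₀ : ℝ := K - K * s m₀ + c * (m₀:ℝ) with hC₀_def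
    have hL : Tendsto (fun n => K * (s (mf n) / (n:ℝ)) - c + C₀ * (1 / (n:ℝ)))
        atTop (nhds 2) := by
      have h1 := (hsm_ratio.const_mul K).sub_const c
      have h2 := (tendsto_one_div_atTop_nhds_zero_nat).const_mul C₀
      have h3 := h1.add h2
      simp only [mul_zero, add_zero] at h3
      have hKθ : K * (θ / 2) - c = 2 := by
        rw [hK_def]; field_simp; ring
      rw [← hKθ]; exact h3
    have hev := hL.eventually (eventually_gt_nhds (show (1:ℝ) < 2 by norm_num))
    filter_upwards [hev, hmf_top.eventually (eventually_ge_atTop m₀),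
      eventually_ge_atTop 1] with n hL' hm hn1
    have hn' : (0:ℝ) < (n:ℝ) := by exact_mod_cast Nat.lt_of_lt_of_le Nat.zero_lt_one hn1
    have hs1 := hstage1 (mf n) hm
    have hexp : K * (s (mf n)) - c * (n:ℝ) + C₀
        = (K * (s (mf n) / (n:ℝ)) - c + C₀ * (1 / (n:ℝ))) * (n:ℝ) := by
      field_simp
    have hgt : (n:ℝ) ≤ K * (s (mf n)) - c * (n:ℝ) + C₀ := by
      rw [hexp]
      calc (n:ℝ) = 1 * (n:ℝ) := by ring
        _ ≤ _ := mul_le_mul_of_nonneg_right hL'.le hn'.le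
    have hn_ge1 : (1:ℝ) ≤ (n:ℝ) := by exact_mod_cast hn1
    simp only [hC₀_def] at hgt
    linarith [hs1]
  -- conclusion
  filter_upwards [hcount, hmain, eventually_ge_atTop 1] with n hcnt hmn hn1
  have h2 := hstage2 (mf n) n (hmf_le n)
  have hDD : (2:ℝ) ^ (β * (n:ℝ)) ≤ (2:ℝ) ^ (s n - s (mf n)) :=
    Real.rpow_le_rpow_of_exponent_le (by norm_num) hcnt
  have hD0 : (0:ℝ) < (2:ℝ) ^ (β * (n:ℝ)) := Real.rpow_pos_of_pos (by norm_num) _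
  have hMn : (2:ℝ) ^ (β * (n:ℝ)) ≤ M n := by
    calc (2:ℝ) ^ (β * (n:ℝ)) = (2:ℝ) ^ (β * (n:ℝ)) * 1 := by ring
      _ ≤ (2:ℝ) ^ (s n - s (mf n)) * (M (mf n) - c * ((n:ℝ) - (mf n:ℝ))) := by
          apply mul_le_mul hDD hmn zero_le_one (le_of_lt (lt_of_lt_of_le hD0 hDD))
      _ ≤ M n := h2
  have hlogb : Real.logb 2 (x n) ≤ -(2:ℝ) ^ (β * (n:ℝ)) := by
    simp only [hM_def] at hMn; linarith
  calc x n = (2:ℝ) ^ (Real.logb 2 (x n)) :=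
        (Real.rpow_logb (by norm_num) (by norm_num) (hpos n)).symm
    _ ≤ (2:ℝ) ^ (-(2:ℝ) ^ (β * (n:ℝ))) :=
        Real.rpow_le_rpow_of_exponent_le (by norm_num) hlogb

theorem polarization_bootstrap_rate_independent
    {Ω : Type*} [MeasurableSpace Ω] (P : Measure Ω) [IsProbabilityMeasure P]
    (B : ℕ → Ω → ℕ) (hBmeas : ∀ n, Measurable (B n))
    (hBiid : iIndepFun B P)
    (hB1 : ∀ n, 1 ≤ n → P {ω | B n ω = 1} = 1/2)
    (hB0 : ∀ n, 1 ≤ n → P {ω | B n ω = 0} = 1/2)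
    (q : ℝ) (hq : 1 ≤ q)
    (X : ℕ → Ω → ℝ) (hXmeasAmb : ∀ n, Measurable (X n))
    (hX01 : ∀ n ω, X n ω ∈ Set.Icc (0:ℝ) 1)
    (G : ℕ → MeasurableSpace Ω)
    (hG : ∀ n, G n = (MeasurableSpace.comap (X 0) inferInstance) ⊔
        ⨆ i ∈ Finset.Icc 1 n, MeasurableSpace.comap (B i) inferInstance)
    (hXmeas : ∀ n, Measurable[G n] (X n))
    (hindep : ∀ n, Indep (MeasurableSpace.comap (B (n+1)) inferInstance) (G n) P)
    (Xinf : Ω → ℝ) (hXinfmeas : Measurable Xinf)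
    (hconv : ∀ᵐ ω ∂P, Tendsto (fun n => X n ω) atTop (nhds (Xinf ω)))
    (hdyn : ∀ n ω, (X n ω ≠ 0 ∧ X n ω ≠ 1 →
        (B (n+1) ω = 1 → X n ω ≤ X (n+1) ω ∧ X (n+1) ω ≤ q * X n ω) ∧
        (B (n+1) ω = 0 → X (n+1) ω = X n ω ^ 2)) ∧
      ((X n ω = 0 ∨ X n ω = 1) → X (n+1) ω = X n ω))
    (β : ℝ) (hβ : β ∈ Set.Ioo (0:ℝ) (1/2)) :
    Tendsto (fun n => P {ω | X n ω ≤ (2:ℝ) ^ (-(2:ℝ) ^ (β * (n:ℝ)))}) atTop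
      (nhds (P {ω | Xinf ω = 0})) := by
  -- basic measurable sets
  have hset0 : ∀ i : ℕ, MeasurableSet {ω | B i ω = 0} := by
    intro i
    exact (hBmeas i) (measurableSet_singleton 0)
  have hset1 : ∀ i : ℕ, MeasurableSet {ω | B i ω = 1} := by
    intro i
    exact (hBmeas i) (measurableSet_singleton 1)
  -- almost surely the bits are 0 or 1
  have hBval : ∀ᵐ ω ∂P, ∀ n : ℕ, B (n+1) ω = 0 ∨ B (n+1) ω = 1 := by
    rw [ae_all_iff]
    intro n
    rw [ae_iff]
    have hcompl : {ω | ¬(B (n+1) ω = 0 ∨ B (n+1) ω = 1)}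
        = ({ω | B (n+1) ω = 0} ∪ {ω | B (n+1) ω = 1})ᶜ := by
      ext ω; simp [not_or]
    have hdisj : Disjoint {ω | B (n+1) ω = 0} {ω | B (n+1) ω = 1} := by
      rw [Set.disjoint_left]
      intro ω h0 h1
      simp only [Set.mem_setOf_eq] at h0 h1
      omega
    have hu : P ({ω | B (n+1) ω = 0} ∪ {ω | B (n+1) ω = 1}) = 1 := by
      rw [measure_union hdisj (hset1 (n+1)), hB0 (n+1) (by omega), hB1 (n+1) (by omega)]
      exact ENNReal.add_halves 1
    rw [hcompl, measure_compl ((hset0 (n+1)).union (hset1 (n+1))) (measure_ne_top P _), hu,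
      measure_univ, tsub_self]
  -- the Bernoulli indicator variables
  set Y : ℕ → Ω → ℝ := fun i ω => if B (i+1) ω = 0 then 1 else 0 with hY_def
  set f : ℕ → ℝ := fun k => if k = 0 then 1 else 0 with hf_def
  have hfmeas : Measurable f := measurable_of_countable f
  have hYcomp : ∀ i, Y i = f ∘ (B (i+1)) := by
    intro i; rfl
  have hYmeas : ∀ i, Measurable (Y i) := by
    intro i; rw [hYcomp i]; exact hfmeas.comp (hBmeas (i+1))
  have hYmap : ∀ i, Measure.map (Y i) P
      = (2:ENNReal)⁻¹ • Measure.dirac (1:ℝ) + (2:ENNReal)⁻¹ • Measure.dirac (0:ℝ) := by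
    intro i
    ext s hs
    rw [Measure.map_apply (hYmeas i) hs]
    simp only [Measure.coe_add, Measure.coe_smul, Pi.add_apply, Pi.smul_apply,
      Measure.dirac_apply' _ hs, smul_eq_mul]
    by_cases h1s : (1:ℝ) ∈ s <;> by_cases h0s : (0:ℝ) ∈ s
    · have : Y i ⁻¹' s = Set.univ := by
        ext ω
        simp only [Set.mem_preimage, Set.mem_univ, iff_true, hY_def]
        split <;> assumption
      rw [this, measure_univ]
      simp [Set.indicator_of_mem h1s, Set.indicator_of_mem h0s, ENNReal.inv_two_add_inv_two]
    · have : Y i ⁻¹' s = {ω | B (i+1) ω = 0} := by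
        ext ω
        simp only [Set.mem_preimage, Set.mem_setOf_eq, hY_def]
        split <;> simp_all
      rw [this, hB0 (i+1) (by omega)]
      simp [Set.indicator_of_mem h1s, Set.indicator_of_notMem h0s, one_div]
    · have : Y i ⁻¹' s = {ω | B (i+1) ω = 0}ᶜ := by
        ext ω
        simp only [Set.mem_preimage, Set.mem_compl_iff, Set.mem_setOf_eq, hY_def]
        split <;> simp_all
      rw [this, measure_compl (hset0 (i+1)) (measure_ne_top P _), measure_univ,
        hB0 (i+1) (by omega)]
      simp only [Set.indicator_of_notMem h1s, Set.indicator_of_mem h0s, mul_zero, mul_one,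
        zero_add, one_div, Pi.one_apply]
      exact ENNReal.one_sub_inv_two
    · have : Y i ⁻¹' s = ∅ := by
        ext ω
        simp only [Set.mem_preimage, Set.mem_empty_iff_false, iff_false, hY_def]
        split <;> assumption
      rw [this]
      simp [Set.indicator_of_notMem h1s, Set.indicator_of_notMem h0s]
  have hident : ∀ i, IdentDistrib (Y i) (Y 0) P P := by
    intro i
    exact ⟨(hYmeas i).aemeasurable, (hYmeas 0).aemeasurable, by rw [hYmap i, hYmap 0]⟩
  have hpair : Pairwise (Function.onFun (IndepFun · · P) Y) := by
    intro i j hij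
    have hBij : IndepFun (B (i+1)) (B (j+1)) P :=
      hBiid.indepFun (show i+1 ≠ j+1 by omega)
    have := hBij.comp hfmeas hfmeas
    simpa only [Function.onFun, ← hYcomp] using this
  have hY0ind : Y 0 = Set.indicator {ω | B 1 ω = 0} (1 : Ω → ℝ) := by
    funext ω
    simp [hY_def, Set.indicator_apply]
  have hint : Integrable (Y 0) P := by
    rw [hY0ind]
    exact (integrable_const (1:ℝ)).indicator (hset0 1)
  have hintegral : ∫ ω, Y 0 ω ∂P = 1/2 := by
    rw [hY0ind, MeasureTheory.integral_indicator_one (hset0 1), measureReal_def, hB0 1 le_rfl]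
    simp [ENNReal.toReal_div]
  have hslln := ProbabilityTheory.strong_law_ae Y hint hpair hident
  have hlln : ∀ᵐ ω ∂P, Tendsto (fun n => (∑ i ∈ Finset.range n,
      (if B (i+1) ω = 0 then (1:ℝ) else 0)) / n) atTop (nhds (1/2)) := by
    filter_upwards [hslln] with ω hω
    rw [hintegral] at hω
    convert hω using 2 with n
    rw [smul_eq_mul, div_eq_inv_mul]
  -- the thresholds tend to zero
  have htend0 : Tendsto (fun n : ℕ => (2:ℝ) ^ (-(2:ℝ) ^ (β * (n:ℝ)))) atTop (nhds 0) := by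
    have hβn : Tendsto (fun n : ℕ => β * (n:ℝ)) atTop atTop :=
      Tendsto.const_mul_atTop hβ.1 tendsto_natCast_atTop_atTop
    have h2 : Tendsto (fun n : ℕ => (2:ℝ) ^ (β * (n:ℝ))) atTop atTop := by
      have hy : Tendsto (fun y : ℝ => (2:ℝ) ^ y) atTop atTop := by
        simp_rw [Real.rpow_def_of_pos (show (0:ℝ) < 2 by norm_num)]
        exact Real.tendsto_exp_atTop.comp
          (Tendsto.const_mul_atTop (Real.log_pos (by norm_num)) tendsto_id)
      exact hy.comp hβn
    have hbot : Tendsto (fun n : ℕ => -((2:ℝ) ^ (β * (n:ℝ)))) atTop atBot :=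
      tendsto_neg_atTop_atBot.comp h2
    exact (tendsto_rpow_atBot_of_base_gt_one 2 (by norm_num)).comp hbot
  -- measurability
  have hA : MeasurableSet {ω | Xinf ω = 0} := hXinfmeas (measurableSet_singleton 0)
  have hAs : ∀ n : ℕ, MeasurableSet {ω | X n ω ≤ (2:ℝ) ^ (-(2:ℝ) ^ (β * (n:ℝ)))} :=
    fun n => measurableSet_le (hXmeasAmb n) measurable_const
  -- the a.e. convergence of indicators
  have hlim : ∀ᵐ ω ∂P, ∀ᶠ n : ℕ in atTop,
      (ω ∈ {ω | X n ω ≤ (2:ℝ) ^ (-(2:ℝ) ^ (β * (n:ℝ)))} ↔ ω ∈ {ω | Xinf ω = 0}) := by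
    filter_upwards [hconv, hlln, hBval] with ω h1 h2 h3
    by_cases hz : Xinf ω = 0
    · have hx0 : Tendsto (fun n => X n ω) atTop (nhds 0) := hz ▸ h1
      have hdet := polarization_det q hq (fun n => X n ω) (fun n => B n ω)
        (fun n => hX01 n ω) (fun n => hdyn n ω) h3 hx0 h2 β hβ
      filter_upwards [hdet] with n hn
      simp only [Set.mem_setOf_eq, hz, iff_true]
      exact hn
    · have hge : 0 ≤ Xinf ω := ge_of_tendsto' h1 (fun n => (hX01 n ω).1)
      have hp : 0 < Xinf ω := lt_of_le_of_ne hge (Ne.symm hz)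
      have e1 := h1.eventually (eventually_gt_nhds (half_lt_self hp))
      have e2 := htend0.eventually (eventually_lt_nhds (half_pos hp))
      filter_upwards [e1, e2] with n a b
      simp only [Set.mem_setOf_eq, hz, iff_false]
      push_neg
      linarith
  exact MeasureTheory.tendsto_measure_of_ae_tendsto_indicator_of_isFiniteMeasure
    atTop hA hAs hlim
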